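/- Let N_p0 be an integer with N_p0 ≡ K (mod 2) and K ≤ N_p0 ≤ K·3^{m-1}, and set χ = χ(N_p0, K). Define the vector p' = (p'_0, …, p'_{m-1}) by p'_i = Σ_{s=0}^{i} K·3^s − (N_p0 − K)/2 if i = χ; p'_i = 3·((N_p0 − K)/2 − Σ_{s=0}^{i-2} K·3^s) if i = χ + 1 and χ + 1 ≤ m − 1; and p'_i = 0 otherwise. Then p' ∈ Ω(N_p0, K), and C_sum(p) ≤ C_sum(p') for every p ∈ Ω(N_p0, K) (Theorem 3). -/

import Mathlib

/-- A pilot assignment vector `p = (p_0, …, p_{m-1})` for `K` users per cell is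
valid if `0 ≤ p_i ≤ K·3^i` for every `i` and `Σ_i p_i · 3^{-i} = K`. -/
def validPK {m : ℕ} (K : ℕ) (p : Fin m → ℤ) : Prop :=
  (∀ i, 0 ≤ p i ∧ p i ≤ (K : ℤ) * 3 ^ (i : ℕ)) ∧
  (∑ i, (p i : ℝ) / 3 ^ (i : ℕ)) = (K : ℝ)

/-- The pilot length `N_pil(p) = Σ_i p_i`. -/
def Npil {m : ℕ} (p : Fin m → ℤ) : ℤ := ∑ i, p i

/-- The per-cell sum rate `C_sum(p) = Σ_i 3^{-i}·p_i·C_i` with `C_i = C_0 + i·d`. -/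
noncomputable def Csum {m : ℕ} (C0 d : ℝ) (p : Fin m → ℤ) : ℝ :=
  ∑ i, (p i : ℝ) / 3 ^ (i : ℕ) * (C0 + (i : ℕ) * d)

/-- `χ(N, K) = min{k ∈ ℕ : Σ_{i=0}^{k} K·3^i > (N - K)/2}`. -/
noncomputable def chiK (N K : ℤ) : ℕ :=
  sInf {k : ℕ | (N - K) / 2 < ∑ i ∈ Finset.range (k + 1), K * (3 : ℤ) ^ i}

/-- The closed-form optimal pilot assignment vector of Theorem 3:
`p'_i = Σ_{s=0}^{i} K·3^s - (N-K)/2` if `i = χ(N,K)`,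
`p'_i = 3·((N-K)/2 - Σ_{s=0}^{i-2} K·3^s)` if `i = χ(N,K) + 1 ≤ m-1`,
and `p'_i = 0` otherwise. -/
noncomputable def poptK (m : ℕ) (K N : ℤ) : Fin m → ℤ := fun i =>
  if (i : ℕ) = chiK N K then (∑ s ∈ Finset.range (chiK N K + 1), K * 3 ^ s) - (N - K) / 2
  else if (i : ℕ) = chiK N K + 1 then
    3 * ((N - K) / 2 - ∑ s ∈ Finset.range (chiK N K), K * 3 ^ s)
  else 0

lemma two_mul_add_one_le_pow (n : ℕ) : 2 * n + 1 ≤ 3 ^ n := by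
  induction n with
  | zero => simp
  | succ k ih => rw [pow_succ]; nlinarith

lemma key_ineq (c i : ℕ) : (i : ℝ) ≤ (c : ℝ) - 1/2 + (3:ℝ)^i / (2 * (3:ℝ)^c) := by
  rcases le_or_gt c i with h | h
  · obtain ⟨j, rfl⟩ := Nat.exists_eq_add_of_le h
    have h1 : (2*j+1 : ℕ) ≤ 3^j := two_mul_add_one_le_pow j
    have h2 : (2*(j:ℝ)+1) ≤ (3:ℝ)^j := by exact_mod_cast h1
    have h3 : (0:ℝ) < (3:ℝ)^c := by positivity
    rw [pow_add]
    have h4 : (3:ℝ)^c * (3:ℝ)^j / (2*(3:ℝ)^c) = (3:ℝ)^j/2 := by field_simp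
    rw [h4]; push_cast; linarith
  · have h2 : (i:ℝ) + 1 ≤ (c:ℝ) := by exact_mod_cast h
    have h3 : (0:ℝ) < (3:ℝ)^i/(2*(3:ℝ)^c) := by positivity
    linarith

lemma sum_geo_two (K : ℤ) (n : ℕ) :
    2 * ∑ i ∈ Finset.range n, K * 3 ^ i = K * 3 ^ n - K := by
  induction n with
  | zero => simp
  | succ k ih =>
    rw [Finset.sum_range_succ, pow_succ]
    have : K * (3^k*3) = 3*(K*3^k) := by ring
    rw [this]; linarith

lemma sum_two {M : Type*} [AddCommMonoid M] (n a : ℕ) (A B : M) (ha : a < n)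
    (F : ℕ → M) (hF : ∀ j, j ≠ a → j ≠ a + 1 → F j = 0)
    (hA : F a = A) (hB : a + 1 < n → F (a+1) = B) (hB0 : ¬ a + 1 < n → B = 0) :
    ∑ i ∈ Finset.range n, F i = A + B := by
  have key : ∀ j ∈ Finset.range n,
      F j = (if j = a then A else 0) + (if j = a + 1 then B else 0) := by
    intro j hj
    rw [Finset.mem_range] at hj
    by_cases h1 : j = a
    · rw [h1]
      have h4 : a ≠ a + 1 := by omega
      simp [hA, h4]
    by_cases h2 : j = a + 1
    · rw [h2] at hj ⊢
      have h4 : a + 1 ≠ a := by omega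
      simp [h4, hB hj]
    · simp [h1, h2, hF j h1 h2]
  rw [Finset.sum_congr rfl key, Finset.sum_add_distrib,
    Finset.sum_ite_eq' (Finset.range n) a (fun _ => A),
    Finset.sum_ite_eq' (Finset.range n) (a+1) (fun _ => B)]
  by_cases h3 : a + 1 < n
  · simp [Finset.mem_range, ha, h3]
  · simp [Finset.mem_range, ha, h3, hB0 h3]


lemma chiK_mem {N K : ℤ} {n : ℕ} (h : (N-K)/2 < ∑ i ∈ Finset.range (n+1), K*3^i) :
    (N-K)/2 < ∑ i ∈ Finset.range (chiK N K + 1), K * 3^i :=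
  Nat.sInf_mem (s := {k : ℕ | (N-K)/2 < ∑ i ∈ Finset.range (k+1), K*3^i}) ⟨n, h⟩

lemma chiK_le {N K : ℤ} {n : ℕ} (h : (N-K)/2 < ∑ i ∈ Finset.range (n+1), K*3^i) :
    chiK N K ≤ n := Nat.sInf_le h

lemma chiK_low {N K : ℤ} (h0 : 0 ≤ (N-K)/2) :
    ∑ i ∈ Finset.range (chiK N K), K*3^i ≤ (N-K)/2 := by
  cases h : chiK N K with
  | zero => simpa using h0
  | succ k =>
    by_contra hc
    push_neg at hc
    have h2 : chiK N K ≤ k :=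
      Nat.sInf_le (show k ∈ {k : ℕ | (N-K)/2 < ∑ i ∈ Finset.range (k+1), K*3^i} from hc)
    omega

lemma popt_sum {m : ℕ} {K N : ℤ} {c : ℕ} {A B : ℤ} {M : Type*} [AddCommMonoid M]
    (hc : c < m)
    (hp : ∀ i : Fin m, poptK m K N i =
      if (i:ℕ) = c then A else if (i:ℕ) = c+1 then B else 0)
    (hB0 : ¬ (c+1 < m) → B = 0)
    (G : ℕ → ℤ → M) (hG : ∀ j, G j 0 = 0) :
    ∑ i : Fin m, G (i:ℕ) (poptK m K N i) = G c A + G (c+1) B := by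
  have h1 : ∑ i : Fin m, G (i:ℕ) (poptK m K N i)
      = ∑ j ∈ Finset.range m, G j (if j = c then A else if j = c+1 then B else 0) := by
    rw [← Fin.sum_univ_eq_sum_range
      (fun j => G j (if j = c then A else if j = c+1 then B else 0)) m]
    exact Finset.sum_congr rfl (fun i _ => by rw [hp i])
  rw [h1]
  refine sum_two m c _ _ hc _ ?_ ?_ ?_ ?_
  · intro j hj1 hj2; simp [hj1, hj2, hG]
  · simp
  · intro _
    have h4 : c+1 ≠ c := by omega
    show G (c+1) (if c+1 = c then A else if c+1 = c+1 then B else 0) = G (c+1) B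
    rw [if_neg h4, if_pos rfl]
  · intro h; rw [hB0 h]; exact hG _

lemma main_aux (m : ℕ) (hm : 2 ≤ m) (K : ℕ) (hK : 1 ≤ K) (C0 d : ℝ)
    (hC0 : 0 < C0) (hd : 0 < d)
    (N : ℤ) (c : ℕ) (A B : ℤ) (hc : c < m)
    (hA1 : 0 < A) (hA2 : A ≤ (K:ℤ)*3^c) (hB1 : 0 ≤ B) (hB2 : B ≤ (K:ℤ)*3^(c+1))
    (hAB : A + B = N) (h3AB : 3*A + B = 3*((K:ℤ)*3^c))
    (hB0 : ¬ (c+1 < m) → B = 0)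
    (hp : ∀ i : Fin m, poptK m K N i =
      if (i:ℕ) = c then A else if (i:ℕ) = c+1 then B else 0) :
    (validPK K (poptK m K N) ∧ Npil (poptK m K N) = N) ∧
    ∀ p : Fin m → ℤ, validPK K p → Npil p = N →
      Csum C0 d p ≤ Csum C0 d (poptK m K N) := by
  have h3c : (0:ℝ) < (3:ℝ)^c := by positivity
  have hKr : (A:ℝ)/3^c + (B:ℝ)/3^(c+1) = (K:ℝ) := by
    have hc3 : 3*(A:ℝ) + (B:ℝ) = 3*((K:ℝ)*3^c) := by exact_mod_cast h3AB
    rw [pow_succ]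
    field_simp
    linear_combination hc3
  have hNr : (A:ℝ) + (B:ℝ) = (N:ℝ) := by exact_mod_cast hAB
  have hNpil : Npil (poptK m K N) = N := by
    have h := popt_sum (M := ℤ) hc hp hB0 (fun _ z => z) (fun _ => rfl)
    exact h.trans hAB
  have hValid : validPK K (poptK m K N) := by
    constructor
    · intro i
      rw [hp i]
      split_ifs with h1 h2
      · exact ⟨le_of_lt hA1, by rw [h1]; exact hA2⟩
      · exact ⟨hB1, by rw [h2]; exact hB2⟩
      · exact ⟨le_refl 0, by positivity⟩
    · have h := popt_sum (M := ℝ) hc hp hB0 (fun j z => (z:ℝ)/3^j) (fun j => by simp)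
      exact h.trans hKr
  refine ⟨⟨hValid, hNpil⟩, ?_⟩
  intro p hval hN
  obtain ⟨hbnd, hsum⟩ := hval
  have hpNr : ∑ i : Fin m, (p i : ℝ) = (N:ℝ) := by
    have h := hN
    simp only [Npil] at h
    have h2 : ((∑ i : Fin m, p i : ℤ) : ℝ) = (N:ℝ) := by exact_mod_cast congrArg Int.cast h
    push_cast at h2
    exact h2
  have hEq : Csum C0 d (poptK m K N)
      = (K:ℝ)*(C0 + ((c:ℝ) - 1/2)*d) + (N:ℝ)*(d/(2*(3:ℝ)^c)) := by
    have h := popt_sum (M := ℝ) hc hp hB0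
      (fun j z => (z:ℝ)/3^j*(C0 + (j:ℝ)*d)) (fun j => by simp)
    have h0 : Csum C0 d (poptK m K N)
        = (A:ℝ)/3^c*(C0 + (c:ℝ)*d) + (B:ℝ)/3^(c+1)*(C0 + ((c:ℝ)+1)*d) := by
      have := h
      simp only [Nat.cast_add, Nat.cast_one] at this
      exact this
    rw [h0, ← hKr, ← hNr]
    have h3c1 : (0:ℝ) < (3:ℝ)^(c+1) := by positivity
    field_simp
    ring
  rw [hEq]
  have hterm : ∀ i : Fin m, (p i:ℝ)/3^(i:ℕ)*(C0 + (i:ℕ)*d)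
      ≤ (p i:ℝ)/3^(i:ℕ)*(C0 + ((c:ℝ)-1/2)*d) + (p i:ℝ)*(d/(2*(3:ℝ)^c)) := by
    intro i
    have hp0 : (0:ℝ) ≤ (p i:ℝ) := by exact_mod_cast (hbnd i).1
    have h3i : (0:ℝ) < (3:ℝ)^(i:ℕ) := by positivity
    have hq0 : (0:ℝ) ≤ (p i:ℝ)/3^(i:ℕ) := by positivity
    have hkey := key_ineq c (i:ℕ)
    have hrw : (p i:ℝ)/3^(i:ℕ)*(C0 + ((c:ℝ)-1/2)*d) + (p i:ℝ)*(d/(2*(3:ℝ)^c))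
        = (p i:ℝ)/3^(i:ℕ)*(C0 + (((c:ℝ)-1/2) + (3:ℝ)^(i:ℕ)/(2*(3:ℝ)^c))*d) := by
      field_simp
      ring
    rw [hrw]
    apply mul_le_mul_of_nonneg_left _ hq0
    have h5 : ((i:ℕ):ℝ)*d ≤ (((c:ℝ)-1/2) + (3:ℝ)^(i:ℕ)/(2*(3:ℝ)^c))*d :=
      mul_le_mul_of_nonneg_right hkey hd.le
    linarith
  calc Csum C0 d p
      ≤ ∑ i : Fin m, ((p i:ℝ)/3^(i:ℕ)*(C0 + ((c:ℝ)-1/2)*d) + (p i:ℝ)*(d/(2*(3:ℝ)^c))) :=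
        Finset.sum_le_sum (fun i _ => hterm i)
    _ = (∑ i : Fin m, (p i:ℝ)/3^(i:ℕ))*(C0 + ((c:ℝ)-1/2)*d)
        + (∑ i : Fin m, (p i:ℝ))*(d/(2*(3:ℝ)^c)) := by
        rw [Finset.sum_add_distrib, Finset.sum_mul, Finset.sum_mul]
    _ = (K:ℝ)*(C0 + ((c:ℝ) - 1/2)*d) + (N:ℝ)*(d/(2*(3:ℝ)^c)) := by
        rw [hsum, hpNr]

/-- Theorem 3: for `N_p0 ≡ K (mod 2)` with `K ≤ N_p0 ≤ K·3^{m-1}`, the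
closed-form vector `p'` belongs to `Ω(N_p0, K)` and maximizes `C_sum` there. -/
theorem theorem3_optimal_fixed_length_multiuser (m : ℕ) (hm : 2 ≤ m)
    (K : ℕ) (hK : 1 ≤ K) (C0 d : ℝ) (hC0 : 0 < C0) (hd : 0 < d)
    (Np0 : ℤ) (hpar : Np0 ≡ (K : ℤ) [ZMOD 2])
    (h1 : (K : ℤ) ≤ Np0) (h2 : Np0 ≤ (K : ℤ) * 3 ^ (m - 1)) :
    (validPK K (poptK m K Np0) ∧ Npil (poptK m K Np0) = Np0) ∧
    ∀ p : Fin m → ℤ, validPK K p → Npil p = Np0 →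
      Csum C0 d p ≤ Csum C0 d (poptK m K Np0) := by
  have hdvd : (2:ℤ) ∣ Np0 - (K:ℤ) := hpar.symm.dvd
  have hM2 : 2*((Np0 - (K:ℤ))/2) = Np0 - (K:ℤ) := Int.mul_ediv_cancel' hdvd
  have hM0 : (0:ℤ) ≤ (Np0 - (K:ℤ))/2 := by omega
  have hKpos : (0:ℤ) < (K:ℤ) := by exact_mod_cast hK
  have hp1 : (0:ℤ) < (K:ℤ)*3^(m-1) := by positivity
  have hmemm : (Np0 - (K:ℤ))/2 < ∑ i ∈ Finset.range ((m-1)+1), (K:ℤ)*3^i := by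
    rw [show (m-1)+1 = m from by omega]
    have hg := sum_geo_two (K:ℤ) m
    have h3 : (K:ℤ)*3^m = 3*((K:ℤ)*3^(m-1)) := by
      have hpm : (3:ℤ)^m = 3^(m-1)*3 := by rw [← pow_succ]; congr 1; omega
      rw [hpm]; ring
    linarith
  set c := chiK Np0 (K:ℤ) with hcdef
  have hχmem : (Np0 - (K:ℤ))/2 < ∑ i ∈ Finset.range (c+1), (K:ℤ)*3^i := chiK_mem hmemm
  have hχle : c ≤ m - 1 := chiK_le hmemm
  have hcm : c < m := by omega
  have hlow : ∑ i ∈ Finset.range c, (K:ℤ)*3^i ≤ (Np0 - (K:ℤ))/2 := chiK_low hM0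
  have hssucc : ∑ i ∈ Finset.range (c+1), (K:ℤ)*3^i
      = (∑ i ∈ Finset.range c, (K:ℤ)*3^i) + (K:ℤ)*3^c := Finset.sum_range_succ _ c
  have hpc : (0:ℤ) < (K:ℤ)*3^c := by positivity
  have hps : (K:ℤ)*3^(c+1) = 3*((K:ℤ)*3^c) := by rw [pow_succ]; ring
  have hgc := sum_geo_two (K:ℤ) c
  refine main_aux m hm K hK C0 d hC0 hd Np0 c
    ((∑ s ∈ Finset.range (c+1), (K:ℤ)*3^s) - (Np0 - (K:ℤ))/2)
    (3*((Np0 - (K:ℤ))/2 - ∑ s ∈ Finset.range c, (K:ℤ)*3^s))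
    hcm (by linarith) (by linarith) (by linarith) (by linarith)
    (by linarith) (by linarith) ?_ (fun i => rfl)
  intro h
  have hc1 : c = m - 1 := by omega
  have hg := sum_geo_two (K:ℤ) c
  have hpe : (K:ℤ)*3^c = (K:ℤ)*3^(m-1) := by rw [hc1]
  linarith
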